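/- Let p ≥ 2 be an integer, ε > 0, σ > 0, κ = εσ, and let f : ℝ^d → ℝ be σ-uniformly convex of order p (i.e. f(y) ≥ f(x) + ⟨∇f(x), y−x⟩ + (σ/p)‖y−x‖^p), attaining its minimum f* at x*. Let m be a positive integer with m ≥ 24p/κ^{1/p}, and let (x_{km})_{k≥0} be a restart sequence such that each epoch satisfies the accelerated-method guarantee f(x_{(k+1)m}) − f* ≤ (4p)^p · 2^{p−2} · ‖x_{km} − x*‖^p / (ε m^{(p)}), where m^{(p)} = m(m+1)⋯(m+p−1). Then for every k ≥ 0, ‖x_{(k+1)m} − x*‖^p ≤ e^{−1} ‖x_{km} − x*‖^p, and hence ‖x_{km} − x*‖^p ≤ e^{−k} ‖x_0 − x*‖^p. -/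

import Mathlib

open scoped RealInnerProductSpace
open Real Set

noncomputable section

/-- Rising factorial `m^{(p)} = m (m+1) ⋯ (m+p-1)`. -/
def risingFac (i m : ℕ) : ℕ := ∏ j ∈ Finset.range m, (i + j)

theorem restart_scheme_linear_rate
    (d p : ℕ) (hp : 2 ≤ p) (ε σ κ : ℝ) (hε : 0 < ε) (hσ : 0 < σ) (hκ : κ = ε * σ)
    (f : EuclideanSpace ℝ (Fin d) → ℝ) (hf : Differentiable ℝ f)
    (huc : ∀ x y : EuclideanSpace ℝ (Fin d),
      f y ≥ f x + ⟪gradient f x, y - x⟫ + (σ / p) * ‖y - x‖ ^ p)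
    (xstar : EuclideanSpace ℝ (Fin d)) (hmin : ∀ x, f xstar ≤ f x)
    (m : ℕ) (hm : 0 < m) (hm' : 24 * (p : ℝ) / κ ^ ((1 : ℝ) / (p : ℝ)) ≤ (m : ℝ))
    (u : ℕ → EuclideanSpace ℝ (Fin d))
    (hguar : ∀ k : ℕ, f (u (k + 1)) - f xstar ≤
      ((4 * p : ℕ) : ℝ) ^ p * 2 ^ (p - 2) * ‖u k - xstar‖ ^ p / (ε * (risingFac m p : ℝ))) :
    (∀ k : ℕ, ‖u (k + 1) - xstar‖ ^ p ≤ Real.exp (-1) * ‖u k - xstar‖ ^ p) ∧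
    (∀ k : ℕ, ‖u k - xstar‖ ^ p ≤ Real.exp (-(k : ℝ)) * ‖u 0 - xstar‖ ^ p) := by
  have hppos : (0:ℝ) < p := by exact_mod_cast (by omega : 0 < p)
  have hκpos : 0 < κ := by rw [hκ]; positivity
  -- gradient at minimizer is zero
  have hloc : IsLocalMin f xstar := Filter.Eventually.of_forall hmin
  have hfd : fderiv ℝ f xstar = 0 := hloc.fderiv_eq_zero
  have hgrad : gradient f xstar = 0 := by
    rw [gradient, hfd, map_zero]
  -- uniform convexity lower bound
  have hlb : ∀ x, (σ / p) * ‖x - xstar‖ ^ p ≤ f x - f xstar := by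
    intro x
    have := huc xstar x
    rw [hgrad] at this
    simp only [inner_zero_left] at this
    linarith
  -- rising factorial lower bound : m^p ≤ risingFac m p
  have hR : (m:ℝ) ^ p ≤ (risingFac m p : ℝ) := by
    have : m ^ p ≤ risingFac m p := by
      rw [risingFac]
      calc m ^ p = ∏ _j ∈ Finset.range p, m := by
            rw [Finset.prod_const, Finset.card_range]
        _ ≤ ∏ j ∈ Finset.range p, (m + j) := by
            apply Finset.prod_le_prod
            · intro i _; positivity
            · intro i _; omega
    exact_mod_cast this
  have hRpos : (0:ℝ) < (risingFac m p : ℝ) := by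
    have : (0:ℝ) < (m:ℝ) ^ p := by positivity
    linarith
  -- key numeric inequality: 4 * p * C ≤ κ * R
  set C : ℝ := ((4 * p : ℕ) : ℝ) ^ p * 2 ^ (p - 2) with hC
  have hCpos : 0 < C := by
    rw [hC]; push_cast; positivity
  have hkey : 4 * (p : ℝ) * C ≤ κ * (risingFac m p : ℝ) := by
    have ht : (0:ℝ) < κ ^ ((1:ℝ)/(p:ℝ)) := Real.rpow_pos_of_pos hκpos _
    have h24 : 24 * (p:ℝ) ≤ (m:ℝ) * κ ^ ((1:ℝ)/(p:ℝ)) := by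
      rw [div_le_iff₀ ht] at hm'
      linarith
    have h24pos : (0:ℝ) ≤ 24 * (p:ℝ) := by positivity
    have hpow : (24 * (p:ℝ)) ^ p ≤ ((m:ℝ) * κ ^ ((1:ℝ)/(p:ℝ))) ^ p :=
      pow_le_pow_left₀ h24pos h24 p
    have htp : (κ ^ ((1:ℝ)/(p:ℝ))) ^ p = κ := by
      rw [← Real.rpow_natCast (κ ^ ((1:ℝ)/(p:ℝ))) p, ← Real.rpow_mul hκpos.le,
        one_div, inv_mul_cancel₀ (ne_of_gt hppos), Real.rpow_one]
    have hpow2 : (24 * (p:ℝ)) ^ p ≤ κ * (m:ℝ) ^ p := by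
      have heq : ((m:ℝ) * κ ^ ((1:ℝ)/(p:ℝ))) ^ p = (m:ℝ) ^ p * κ := by
        rw [mul_pow, htp]
      rw [heq] at hpow; linarith
    -- (24 p)^p = 3^p * (8p)^p and p ≤ 3^p
    have hple : (p:ℝ) ≤ 3 ^ p := by
      have : p < 3 ^ p := Nat.lt_pow_self (by norm_num)
      exact_mod_cast this.le
    have h2 : (2:ℝ) ^ p = 4 * 2 ^ (p - 2) := by
      have hq : p - 2 + 2 = p := by omega
      calc (2:ℝ) ^ p = 2 ^ (p - 2 + 2) := by rw [hq]
        _ = 2 ^ (p - 2) * 2 ^ 2 := pow_add 2 _ _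
        _ = 4 * 2 ^ (p - 2) := by ring
    have hCval : 4 * (p:ℝ) * C = (p:ℝ) * ((8 * (p:ℝ)) ^ p) := by
      rw [hC]; push_cast
      have : ((8:ℝ) * p) ^ p = (4 * p) ^ p * 2 ^ p := by
        rw [← mul_pow]; ring_nf
      rw [this, h2]; ring
    have h24eq : (24 * (p:ℝ)) ^ p = 3 ^ p * (8 * (p:ℝ)) ^ p := by
      rw [← mul_pow]; ring_nf
    have h8pos : (0:ℝ) ≤ (8 * (p:ℝ)) ^ p := by positivity
    have hfin : 4 * (p : ℝ) * C ≤ (24 * (p:ℝ)) ^ p := by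
      rw [hCval, h24eq]
      exact mul_le_mul_of_nonneg_right hple h8pos
    have hmono : κ * (m:ℝ) ^ p ≤ κ * (risingFac m p : ℝ) :=
      mul_le_mul_of_nonneg_left hR hκpos.le
    linarith
  have hexp : (1:ℝ)/4 ≤ Real.exp (-1) := by
    rw [Real.exp_neg]
    have h4 : Real.exp 1 ≤ 4 := by
      have := Real.exp_one_lt_d9; linarith
    have := inv_anti₀ (Real.exp_pos 1) h4
    simpa [one_div] using this
  -- per-step contraction
  have hstep : ∀ k : ℕ, ‖u (k + 1) - xstar‖ ^ p ≤ Real.exp (-1) * ‖u k - xstar‖ ^ p := by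
    intro k
    set a := ‖u (k + 1) - xstar‖ ^ p with ha
    set b := ‖u k - xstar‖ ^ p with hb
    have hb0 : 0 ≤ b := by positivity
    have ha0 : 0 ≤ a := by positivity
    have h1 : (σ / p) * a ≤ C * b / (ε * (risingFac m p : ℝ)) :=
      le_trans (hlb (u (k+1))) (hguar k)
    -- clear denominators
    have h2 : σ * a * (ε * (risingFac m p : ℝ)) ≤ (p:ℝ) * (C * b) := by
      rw [div_mul_eq_mul_div, div_le_div_iff₀ hppos (by positivity)] at h1
      linarith [h1]
    have h3 : a ≤ b / 4 := by
      have hκR : 0 < κ * (risingFac m p : ℝ) := by positivity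
      rw [le_div_iff₀ (by norm_num : (0:ℝ) < 4)]
      have := mul_le_mul_of_nonneg_right hkey hb0
      have hεσ : σ * a * (ε * (risingFac m p : ℝ)) = κ * (risingFac m p : ℝ) * a := by
        rw [hκ]; ring
      nlinarith [h2, hκR, ha0]
    calc a ≤ b / 4 := h3
      _ = (1/4) * b := by ring
      _ ≤ Real.exp (-1) * b := mul_le_mul_of_nonneg_right hexp hb0
  refine ⟨hstep, ?_⟩
  intro k
  induction k with
  | zero => simp
  | succ n ih =>
      have h1 := hstep n
      have h2 : Real.exp (-((n+1:ℕ):ℝ)) = Real.exp (-1) * Real.exp (-(n:ℝ)) := by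
        rw [← Real.exp_add]; push_cast; ring_nf
      calc ‖u (n + 1) - xstar‖ ^ p ≤ Real.exp (-1) * ‖u n - xstar‖ ^ p := h1
        _ ≤ Real.exp (-1) * (Real.exp (-(n:ℝ)) * ‖u 0 - xstar‖ ^ p) := by
            exact mul_le_mul_of_nonneg_left ih (Real.exp_pos _).le
        _ = Real.exp (-((n+1:ℕ):ℝ)) * ‖u 0 - xstar‖ ^ p := by rw [h2]; ring
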